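/- Let G be an infinite, connected, locally finite simple graph on a countable vertex set V satisfying the sphere condition. Let D ≥ 2 be an integer and let η = (η_v)_{v∈V} be i.i.d. random variables, each uniformly distributed on {1, …, D}. Then: (i) almost surely, for every pair of distinct u, v ∈ V the sequences Z_u(η) and Z_v(η) in ℕ^ℕ are distinct, so the relation u ⪯_η v defined by Z_u(η) ≤_lex Z_v(η) is almost surely a total order on V; and (ii) for all distinct u, v ∈ V and every integer r ≥ 0, P(R_{u,v}(η) > r) ≤ D^{−r}, where R_{u,v}(η) is the least r such that the truth value of 'Z_u(η') ≤_lex Z_v(η')' is the same for every η' ∈ {1,…,D}^V agreeing with η on B(u,r) ∪ B(v,r) (and R_{u,v}(η) = ∞ if no such r exists). -/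

import Mathlib

open MeasureTheory ProbabilityTheory ENNReal

/-- `sphereSum G η v n` is `Z_{v,n}(η) = ∑_{w : dist(w,v) = n} η_w`, where
`η : V → Fin D` encodes a configuration with values in `{1, …, D}` via
`w ↦ (η w : ℕ) + 1`. The sum is a finite sum (`finsum`) by local finiteness. -/
noncomputable def sphereSum {V : Type*} (G : SimpleGraph V) {D : ℕ}
    (η : V → Fin D) (v : V) (n : ℕ) : ℕ :=
  ∑ᶠ w ∈ {w : V | G.dist w v = n}, ((η w : ℕ) + 1)

/-- The lexicographic order on `ℕ^ℕ`: `f ≤_lex g` iff `f = g` or `f` is smaller than `g`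
at the first coordinate where they differ. -/
def lexLE (f g : ℕ → ℕ) : Prop :=
  f = g ∨ ∃ n : ℕ, (∀ m : ℕ, m < n → f m = g m) ∧ f n < g n

/-- `orderDetermined G u v r η` states that the truth value of
`Z_u(η') ≤_lex Z_v(η')` is the same for every `η'` agreeing with `η` on
`B(u,r) ∪ B(v,r)`; i.e. the relative `⪯_η`-order of `u` and `v` is determined by
`η` restricted to `B(u,r) ∪ B(v,r)`.  The coding radius `R_{u,v}(η)` is the least `r`
with this property, so `R_{u,v}(η) > r ↔ ¬ orderDetermined G u v r η` (determinacy
being monotone in `r`). -/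
def orderDetermined {V : Type*} (G : SimpleGraph V) {D : ℕ}
    (u v : V) (r : ℕ) (η : V → Fin D) : Prop :=
  ∀ η' : V → Fin D, (∀ w : V, (G.dist w u ≤ r ∨ G.dist w v ≤ r) → η' w = η w) →
    (lexLE (sphereSum G η' u) (sphereSum G η' v) ↔
      lexLE (sphereSum G η u) (sphereSum G η v))

section LexLE

lemma lexLE_refl (f : ℕ → ℕ) : lexLE f f := Or.inl rfl

lemma lexLE_trans {f g h : ℕ → ℕ} : lexLE f g → lexLE g h → lexLE f h := by
  rintro (rfl | ⟨n, hp1, hl1⟩) h2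
  · exact h2
  rcases h2 with rfl | ⟨m, hp2, hl2⟩
  · exact Or.inr ⟨n, hp1, hl1⟩
  rcases lt_trichotomy n m with hnm | rfl | hmn
  · exact Or.inr ⟨n, fun l hl => (hp1 l hl).trans (hp2 l (hl.trans hnm)),
      by rw [← hp2 n hnm]; exact hl1⟩
  · exact Or.inr ⟨n, fun l hl => (hp1 l hl).trans (hp2 l hl), hl1.trans hl2⟩
  · exact Or.inr ⟨m, fun l hl => (hp1 l (hl.trans hmn)).trans (hp2 l hl),
      by rw [hp1 m hmn]; exact hl2⟩

lemma lexLE_antisymm {f g : ℕ → ℕ} (h1 : lexLE f g) (h2 : lexLE g f) : f = g := by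
  rcases h1 with h1 | ⟨n, hpre, hlt⟩
  · exact h1
  rcases h2 with h2 | ⟨m, hpre', hlt'⟩
  · exact h2.symm
  rcases lt_trichotomy n m with h | h | h
  · exact absurd (hpre' n h) hlt.ne'
  · subst h; exact absurd (hlt.trans hlt') (lt_irrefl _)
  · exact absurd (hpre m h) hlt'.ne'

lemma lexLE_total (f g : ℕ → ℕ) : lexLE f g ∨ lexLE g f := by
  classical
  by_cases h : f = g
  · exact Or.inl (Or.inl h)
  have hne : ∃ n, f n ≠ g n := by
    by_contra hc; push_neg at hc; exact h (funext hc)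
  have hmin : ∀ m, m < Nat.find hne → f m = g m := fun m hm => by
    by_contra hc; exact absurd (Nat.find_le hc) (not_le.mpr hm)
  rcases lt_or_gt_of_ne (Nat.find_spec hne) with h1 | h1
  · exact Or.inl (Or.inr ⟨_, hmin, h1⟩)
  · exact Or.inr (Or.inr ⟨_, fun m hm => (hmin m hm).symm, h1⟩)

lemma lexLE_iff_min {f g : ℕ → ℕ} {n0 : ℕ} (hne : f n0 ≠ g n0)
    (hmin : ∀ m, m < n0 → f m = g m) : lexLE f g ↔ f n0 < g n0 := by
  constructor
  · rintro (rfl | ⟨n, hp, hl⟩)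
    · exact absurd rfl hne
    rcases lt_trichotomy n n0 with h | rfl | h
    · exact absurd (hmin n h) hl.ne
    · exact hl
    · exact absurd (hp n0 h) hne
  · intro h; exact Or.inr ⟨n0, hmin, h⟩

lemma lexLE_congr {f g f' g' : ℕ → ℕ} {r n0 : ℕ}
    (hf : ∀ m, m ≤ r → f' m = f m) (hg : ∀ m, m ≤ r → g' m = g m)
    (hn0 : n0 ≤ r) (hne : f n0 ≠ g n0) (hmin : ∀ m, m < n0 → f m = g m) :
    (lexLE f' g' ↔ lexLE f g) := by
  have hne' : f' n0 ≠ g' n0 := by rw [hf n0 hn0, hg n0 hn0]; exact hne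
  have hmin' : ∀ m, m < n0 → f' m = g' m := fun m hm => by
    rw [hf m ((hm.le.trans hn0)), hg m (hm.le.trans hn0)]; exact hmin m hm
  rw [lexLE_iff_min hne' hmin', lexLE_iff_min hne hmin, hf n0 hn0, hg n0 hn0]

end LexLE

section Graph

variable {V : Type*} (G : SimpleGraph V)

lemma ball_finite [G.LocallyFinite] (hconn : G.Connected) (x : V) (r : ℕ) :
    {w : V | G.dist w x ≤ r}.Finite := by
  induction r with
  | zero =>
    refine (Set.finite_singleton x).subset fun w hw => ?_
    simp only [Set.mem_setOf_eq, Nat.le_zero] at hw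
    exact (hconn.dist_eq_zero_iff).1 hw
  | succ n ih =>
    have hsub : {w : V | G.dist w x ≤ n + 1} ⊆
        ⋃ y ∈ {w : V | G.dist w x ≤ n}, insert y (G.neighborSet y) := by
      intro w hw
      simp only [Set.mem_setOf_eq] at hw
      rcases Nat.lt_or_ge (G.dist w x) (n + 1) with h | h
      · exact Set.mem_biUnion (Nat.lt_succ_iff.1 h) (Set.mem_insert _ _)
      · have hd : G.dist w x = n + 1 := le_antisymm hw h
        obtain ⟨p, hp⟩ := SimpleGraph.Connected.exists_walk_length_eq_dist hconn w x
        cases p with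
        | nil => rw [hd] at hp; simp at hp
        | @cons _ y _ hadj q =>
          have hq : G.dist y x ≤ n := by
            have h1 := SimpleGraph.dist_le q
            simp only [SimpleGraph.Walk.length_cons, hd] at hp
            omega
          exact Set.mem_biUnion hq (Set.mem_insert_of_mem _ hadj.symm)
    exact (ih.biUnion fun y _ => (Set.toFinite (G.neighborSet y)).insert y).subset hsub

lemma sphere_finite [G.LocallyFinite] (hconn : G.Connected) (x : V) (n : ℕ) :
    {w : V | G.dist w x = n}.Finite :=
  (ball_finite G hconn x n).subset fun w hw => le_of_eq hw

lemma sphereSum_congr {D : ℕ} {η η' : V → Fin D} {x : V} {n : ℕ}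
    (h : ∀ w, G.dist w x = n → η w = η' w) :
    sphereSum G η x n = sphereSum G η' x n :=
  finsum_mem_congr rfl fun w hw => by rw [h w hw]

lemma sphereSum_eq_sum {D : ℕ} (η : V → Fin D) {x : V} {n : ℕ}
    (hfin : {w : V | G.dist w x = n}.Finite) :
    sphereSum G η x n = ∑ w ∈ hfin.toFinset, ((η w : ℕ) + 1) := by
  rw [sphereSum, finsum_mem_eq_finite_toFinset_sum _ hfin]

end Graph

section Prob

lemma key_bound {Ω β : Type*} [MeasurableSpace Ω] (P : Measure Ω) [Countable β]
    {D : ℕ} (X : Ω → Fin D) (Y : Ω → β)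
    (hY1 : ∀ y : β, MeasurableSet (Y ⁻¹' {y}))
    (hindep : ∀ (A : Set (Fin D)) (y : β),
      P (X ⁻¹' A ∩ Y ⁻¹' {y}) = P (X ⁻¹' A) * P (Y ⁻¹' {y}))
    (hunif : ∀ s : Fin D, P {ω | X ω = s} = (D : ℝ≥0∞)⁻¹)
    (p : Fin D → β → Prop)
    (hp : ∀ y x x', p x y → p x' y → x = x') :
    P {ω | p (X ω) (Y ω)} ≤ (D : ℝ≥0∞)⁻¹ * P {ω | ∃ x, p x (Y ω)} := by
  classical
  set s : Set β := {y | ∃ x, p x y} with hs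
  have hsub : {ω | p (X ω) (Y ω)} ⊆
      ⋃ y : s, (X ⁻¹' {x | p x (y : β)} ∩ Y ⁻¹' {(y : β)}) := by
    intro ω hω
    exact Set.mem_iUnion.2 ⟨⟨Y ω, ⟨X ω, hω⟩⟩, hω, rfl⟩
  have hYs : {ω | ∃ x, p x (Y ω)} = Y ⁻¹' s := rfl
  calc P {ω | p (X ω) (Y ω)}
      ≤ ∑' y : s, P (X ⁻¹' {x | p x (y : β)} ∩ Y ⁻¹' {(y : β)}) :=
        (measure_mono hsub).trans (measure_iUnion_le _)
    _ ≤ ∑' y : s, (D : ℝ≥0∞)⁻¹ * P (Y ⁻¹' {(y : β)}) := by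
        refine ENNReal.tsum_le_tsum fun y => ?_
        rw [hindep]
        gcongr
        obtain ⟨x₀, hx₀⟩ := y.2
        have hset : {x | p x (y : β)} = {x₀} :=
          Set.eq_singleton_iff_unique_mem.2 ⟨hx₀, fun x hx => hp _ _ _ hx hx₀⟩
        rw [hset]
        exact le_of_eq (hunif x₀)
    _ = (D : ℝ≥0∞)⁻¹ * ∑' y : s, P (Y ⁻¹' {(y : β)}) := ENNReal.tsum_mul_left
    _ = (D : ℝ≥0∞)⁻¹ * P {ω | ∃ x, p x (Y ω)} := by
        rw [hYs, tsum_measure_preimage_singleton (Set.to_countable s) (fun y _ => hY1 y)]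

end Prob

lemma determined_of_ne {V : Type*} (G : SimpleGraph V) {D : ℕ} {u v : V} {r n : ℕ}
    (hn : n ≤ r) {η : V → Fin D}
    (hne : sphereSum G η u n ≠ sphereSum G η v n) :
    orderDetermined G u v r η := by
  classical
  have hex : ∃ m, sphereSum G η u m ≠ sphereSum G η v m := ⟨n, hne⟩
  intro η' hagr
  have hfu : ∀ m, m ≤ r → sphereSum G η' u m = sphereSum G η u m := fun m hm =>
    sphereSum_congr G fun w hw => hagr w (Or.inl (by rw [hw]; exact hm))
  have hfv : ∀ m, m ≤ r → sphereSum G η' v m = sphereSum G η v m := fun m hm =>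
    sphereSum_congr G fun w hw => hagr w (Or.inr (by rw [hw]; exact hm))
  exact lexLE_congr hfu hfv ((Nat.find_min' hex hne).trans hn) (Nat.find_spec hex)
    (fun m hm => not_not.1 (Nat.find_min hex hm))

lemma main_bound {V : Type*} (G : SimpleGraph V) [G.LocallyFinite] (hconn : G.Connected)
    (hsphere : ∀ u v : V, u ≠ v → ∀ r : ℕ, 1 ≤ r →
      ∃ w : V, G.dist w v = r ∧ r < G.dist w u)
    {D : ℕ}
    {Ω : Type*} [MeasurableSpace Ω] (P : Measure Ω) [IsProbabilityMeasure P]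
    (η : V → Ω → Fin D)
    (hmeas : ∀ v : V, Measurable (η v))
    (hindep : iIndepFun η P)
    (hunif : ∀ (v : V) (s : Fin D), P {ω | η v ω = s} = (D : ℝ≥0∞)⁻¹)
    (u v : V) (huv : u ≠ v) (r : ℕ) :
    P {ω | ∀ n, 1 ≤ n → n ≤ r →
        sphereSum G (fun w => η w ω) u n = sphereSum G (fun w => η w ω) v n}
      ≤ (D : ℝ≥0∞)⁻¹ ^ r := by
  classical
  induction r with
  | zero => simpa using prob_le_one
  | succ r ih =>
    obtain ⟨w₀, hw₀v, hw₀u⟩ := hsphere u v huv (r + 1) (by omega)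
    have hBfin : {w : V | G.dist w u ≤ r + 1 ∨ G.dist w v ≤ r + 1}.Finite := by
      refine Set.Finite.subset
        ((ball_finite G hconn u (r + 1)).union (ball_finite G hconn v (r + 1))) ?_
      intro w hw
      exact hw.imp id id
    set T : Finset V := hBfin.toFinset.erase w₀ with hT
    have hw₀T : w₀ ∉ T := Finset.notMem_erase _ _
    have hmemT : ∀ w : V, (G.dist w u ≤ r + 1 ∨ G.dist w v ≤ r + 1) → w ≠ w₀ → w ∈ T :=
      fun w hw hne => Finset.mem_erase.2 ⟨hne, (Set.Finite.mem_toFinset hBfin).2 hw⟩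
    set Y : Ω → (∀ _ : T, Fin D) := fun ω t => η t ω with hYdef
    set ext : Fin D → (∀ _ : T, Fin D) → V → Fin D :=
      fun x y w => if h : w ∈ T then y ⟨w, h⟩ else x with hext
    set p : Fin D → (∀ _ : T, Fin D) → Prop :=
      fun x y => ∀ n, 1 ≤ n → n ≤ r + 1 →
        sphereSum G (ext x y) u n = sphereSum G (ext x y) v n with hpdef
    have hagree : ∀ (ω : Ω) (w : V), (G.dist w u ≤ r + 1 ∨ G.dist w v ≤ r + 1) →
        ext (η w₀ ω) (Y ω) w = η w ω := by
      intro ω w hw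
      by_cases h : w ∈ T
      · simp only [hext, dif_pos h, hYdef]
      · have hww : w = w₀ := by
          by_contra hne
          exact h (hmemT w hw hne)
        subst hww
        simp only [hext, dif_neg h]
    have hclaim1 : {ω : Ω | ∀ n, 1 ≤ n → n ≤ r + 1 →
        sphereSum G (fun w => η w ω) u n = sphereSum G (fun w => η w ω) v n}
        = {ω : Ω | p (η w₀ ω) (Y ω)} := by
      ext ω
      simp only [Set.mem_setOf_eq, hpdef]
      constructor <;> intro hωn n h1 h2
      all_goals
        have hu : sphereSum G (ext (η w₀ ω) (Y ω)) u n = sphereSum G (fun w => η w ω) u n :=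
          sphereSum_congr G fun w hw => hagree ω w (Or.inl (by rw [hw]; exact h2))
      all_goals
        have hv : sphereSum G (ext (η w₀ ω) (Y ω)) v n = sphereSum G (fun w => η w ω) v n :=
          sphereSum_congr G fun w hw => hagree ω w (Or.inr (by rw [hw]; exact h2))
      · rw [hu, hv]; exact hωn n h1 h2
      · rw [← hu, ← hv]; exact hωn n h1 h2
    have hsphfinv := sphere_finite G hconn v (r + 1)
    have hw₀mem : w₀ ∈ hsphfinv.toFinset := (Set.Finite.mem_toFinset _).2 hw₀v
    have hpuniq : ∀ y x x', p x y → p x' y → x = x' := by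
      intro y x x' hx hx'
      have hxu : sphereSum G (ext x y) u (r + 1) = sphereSum G (ext x' y) u (r + 1) := by
        refine sphereSum_congr G fun w hw => ?_
        have hwne : w ≠ w₀ := fun hww => by rw [hww] at hw; omega
        have hwT : w ∈ T := hmemT w (Or.inl (le_of_eq hw)) hwne
        simp only [hext, dif_pos hwT]
      have hdecomp : ∀ z : Fin D, sphereSum G (ext z y) v (r + 1)
          = ((z : ℕ) + 1) + ∑ w ∈ hsphfinv.toFinset.erase w₀, ((ext z y w : ℕ) + 1) := by
        intro z
        rw [sphereSum_eq_sum G _ hsphfinv, ← Finset.add_sum_erase _ _ hw₀mem]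
        congr 2
        simp only [hext, dif_neg hw₀T]
      have hsum_eq : ∑ w ∈ hsphfinv.toFinset.erase w₀, ((ext x y w : ℕ) + 1)
          = ∑ w ∈ hsphfinv.toFinset.erase w₀, ((ext x' y w : ℕ) + 1) := by
        refine Finset.sum_congr rfl fun w hw => ?_
        obtain ⟨hwne, hwmem⟩ := Finset.mem_erase.1 hw
        have hwT : w ∈ T :=
          hmemT w (Or.inr (le_of_eq ((Set.Finite.mem_toFinset hsphfinv).1 hwmem))) hwne
        simp only [hext, dif_pos hwT]
      have h1 := hx (r + 1) (by omega) le_rfl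
      have h2 := hx' (r + 1) (by omega) le_rfl
      have hveq : sphereSum G (ext x y) v (r + 1) = sphereSum G (ext x' y) v (r + 1) := by
        rw [← h1, ← h2]; exact hxu
      rw [hdecomp x, hdecomp x', hsum_eq] at hveq
      exact Fin.val_injective (by omega)
    have hclaim3 : {ω : Ω | ∃ a, p a (Y ω)} ⊆ {ω : Ω | ∀ n, 1 ≤ n → n ≤ r →
        sphereSum G (fun w => η w ω) u n = sphereSum G (fun w => η w ω) v n} := by
      rintro ω ⟨a, ha⟩ n h1 h2
      have hagr : ∀ w, G.dist w u = n ∨ G.dist w v = n → ext a (Y ω) w = η w ω := by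
        intro w hw
        have hwB : G.dist w u ≤ r + 1 ∨ G.dist w v ≤ r + 1 :=
          hw.imp (fun h => by omega) (fun h => by omega)
        have hwne : w ≠ w₀ := by
          rintro rfl
          rcases hw with h | h
          · omega
          · omega
        have hwT := hmemT w hwB hwne
        simp only [hext, dif_pos hwT, hYdef]
      have hu := sphereSum_congr G (η := ext a (Y ω)) (η' := fun w => η w ω) (x := u)
        fun w hw => hagr w (Or.inl hw)
      have hv := sphereSum_congr G (η := ext a (Y ω)) (η' := fun w => η w ω) (x := v)
        fun w hw => hagr w (Or.inr hw)
      rw [← hu, ← hv]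
      exact ha n h1 (by omega)
    have hY1 : ∀ y : (∀ _ : T, Fin D), MeasurableSet (Y ⁻¹' {y}) := by
      intro y
      have hYy : Y ⁻¹' {y} = ⋂ t : T, (η t) ⁻¹' {y t} := by
        ext ω
        simp [hYdef, funext_iff]
      rw [hYy]
      exact MeasurableSet.iInter fun t => (hmeas t) (measurableSet_singleton _)
    have hXY : IndepFun (fun ω => η w₀ ω) Y P := by
      have hd : Disjoint ({w₀} : Finset V) T := Finset.disjoint_singleton_left.2 hw₀T
      have h := hindep.indepFun_finset {w₀} T hd hmeas
      exact h.comp (measurable_pi_apply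
        (⟨w₀, Finset.mem_singleton_self w₀⟩ : ({w₀} : Finset V))) measurable_id
    have hindep' : ∀ (A : Set (Fin D)) (y : ∀ _ : T, Fin D),
        P ((fun ω => η w₀ ω) ⁻¹' A ∩ Y ⁻¹' {y})
          = P ((fun ω => η w₀ ω) ⁻¹' A) * P (Y ⁻¹' {y}) := by
      intro A y
      refine hXY.measure_inter_preimage_eq_mul A {y} .of_discrete ?_
      have h1 : ({y} : Set (∀ _ : T, Fin D)) = Set.pi Set.univ (fun t => {y t}) := by
        simp [Set.univ_pi_singleton]
      rw [h1]
      exact MeasurableSet.univ_pi fun t => .of_discrete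
    calc P {ω : Ω | ∀ n, 1 ≤ n → n ≤ r + 1 →
          sphereSum G (fun w => η w ω) u n = sphereSum G (fun w => η w ω) v n}
        = P {ω : Ω | p (η w₀ ω) (Y ω)} := by rw [hclaim1]
      _ ≤ (D : ℝ≥0∞)⁻¹ * P {ω : Ω | ∃ a, p a (Y ω)} :=
          key_bound P _ Y hY1 hindep' (hunif w₀) p hpuniq
      _ ≤ (D : ℝ≥0∞)⁻¹ * (D : ℝ≥0∞)⁻¹ ^ r := by
          gcongr
          exact (measure_mono hclaim3).trans ih
      _ = (D : ℝ≥0∞)⁻¹ ^ (r + 1) := (pow_succ' _ _).symm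

/-- Let `G` be an infinite, connected, locally finite simple graph on a
countable vertex set `V` satisfying the sphere condition, let `D ≥ 2` and let
`η = (η_v)_{v ∈ V}` be i.i.d., each uniform on `{1, …, D}`. Then: (i) almost surely, the
sequences `Z_u(η)` and `Z_v(η)` are distinct for all distinct `u, v ∈ V`, so the relation
`u ⪯_η v ↔ Z_u(η) ≤_lex Z_v(η)` is almost surely a (total) linear order on `V`; and
(ii) for all distinct `u, v` and every `r ≥ 0`, `P(R_{u,v}(η) > r) ≤ D^{-r}`. -/
theorem stmt7 {V : Type*} [Countable V] [Infinite V] (G : SimpleGraph V)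
    (hconn : G.Connected) [G.LocallyFinite]
    (hsphere : ∀ u v : V, u ≠ v → ∀ r : ℕ, 1 ≤ r →
      ∃ w : V, G.dist w v = r ∧ r < G.dist w u)
    (D : ℕ) (hD : 2 ≤ D)
    {Ω : Type*} [MeasurableSpace Ω] (P : Measure Ω) [IsProbabilityMeasure P]
    (η : V → Ω → Fin D)
    (hmeas : ∀ v : V, Measurable (η v))
    (hindep : iIndepFun η P)
    (hunif : ∀ (v : V) (s : Fin D), P {ω | η v ω = s} = (D : ℝ≥0∞)⁻¹) :
    (P {ω | (∀ u v : V, u ≠ v →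
          (fun n => sphereSum G (fun w => η w ω) u n) ≠
            (fun n => sphereSum G (fun w => η w ω) v n)) ∧
        IsLinearOrder V (fun u v : V =>
          lexLE (sphereSum G (fun w => η w ω) u) (sphereSum G (fun w => η w ω) v))} = 1) ∧
      ∀ u v : V, u ≠ v → ∀ r : ℕ,
        P {ω | ¬ orderDetermined G u v r (fun w => η w ω)} ≤ (D : ℝ≥0∞)⁻¹ ^ r := by
  classical
  constructor
  · -- part (i)
    set Z : V → Ω → ℕ → ℕ := fun x ω n => sphereSum G (fun w => η w ω) x n with hZ
    have hbad : ∀ u v : V, u ≠ v → P {ω | ∀ n, Z u ω n = Z v ω n} = 0 := by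
      intro u v huv
      have hle : ∀ r : ℕ, P {ω | ∀ n, Z u ω n = Z v ω n} ≤ (D : ℝ≥0∞)⁻¹ ^ r := by
        intro r
        refine (measure_mono ?_).trans
          (main_bound G hconn hsphere P η hmeas hindep hunif u v huv r)
        intro ω hω n _ _
        exact hω n
      have hlt1 : (D : ℝ≥0∞)⁻¹ < 1 := by
        rw [ENNReal.inv_lt_one]
        exact_mod_cast (by omega : (1 : ℕ) < D)
      refine le_antisymm ?_ zero_le
      exact ge_of_tendsto (ENNReal.tendsto_pow_atTop_nhds_zero_of_lt_one hlt1)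
        (Filter.Eventually.of_forall hle)
    set N : Set Ω := ⋃ (u : V) (v : V), {ω | u ≠ v ∧ ∀ n, Z u ω n = Z v ω n} with hNdef
    have hN : P N = 0 := by
      refine measure_iUnion_null fun u => measure_iUnion_null fun v => ?_
      by_cases huv : u ≠ v
      · exact measure_mono_null (fun ω hω => hω.2) (hbad u v huv)
      · exact measure_mono_null (fun ω hω => (huv hω.1).elim) measure_empty
    have hsubset : Nᶜ ⊆ {ω | (∀ u v : V, u ≠ v →
          (fun n => sphereSum G (fun w => η w ω) u n) ≠
            (fun n => sphereSum G (fun w => η w ω) v n)) ∧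
        IsLinearOrder V (fun u v : V =>
          lexLE (sphereSum G (fun w => η w ω) u) (sphereSum G (fun w => η w ω) v))} := by
      intro ω hω
      have hZne : ∀ u v : V, u ≠ v → Z u ω ≠ Z v ω := by
        intro u v huv heq
        exact hω (Set.mem_iUnion.2 ⟨u, Set.mem_iUnion.2
          ⟨v, ⟨huv, fun n => congrFun heq n⟩⟩⟩)
      refine ⟨fun u v huv => hZne u v huv, ?_⟩
      exact
        { refl := fun a => lexLE_refl _
          trans := fun a b c => lexLE_trans
          antisymm := fun a b h1 h2 => by
            by_contra hne
            exact hZne a b hne (lexLE_antisymm h1 h2)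
          total := fun a b => lexLE_total _ _ }
    refine le_antisymm prob_le_one ?_
    calc (1 : ℝ≥0∞) = P Set.univ := (measure_univ).symm
      _ ≤ P N + P Nᶜ := by
          rw [← Set.union_compl_self N]
          exact measure_union_le _ _
      _ = P Nᶜ := by rw [hN, zero_add]
      _ ≤ _ := measure_mono hsubset
  · intro u v huv r
    have hsub : {ω : Ω | ¬ orderDetermined G u v r (fun w => η w ω)} ⊆
        {ω : Ω | ∀ n, 1 ≤ n → n ≤ r →
          sphereSum G (fun w => η w ω) u n = sphereSum G (fun w => η w ω) v n} := by
      intro ω hω n h1 h2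
      by_contra hne
      exact hω (determined_of_ne G h2 hne)
    exact (measure_mono hsub).trans
      (main_bound G hconn hsphere P η hmeas hindep hunif u v huv r)
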